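/- Let X_1, …, X_k be negatively associated random variables taking values in [0,1], X = ∑ X_i, μ = E[X]. Then for any 0 < δ < 1, P[X ≤ μ(1-δ)] ≤ exp(-μδ²/2). -/

import Mathlib

open MeasureTheory Real

lemma stmt19_exp_convex {t x : ℝ} (hx0 : 0 ≤ x) (hx1 : x ≤ 1) :
    Real.exp (t * x) ≤ 1 - x + x * Real.exp t := by
  have h := convexOn_exp.2 (Set.mem_univ (0:ℝ)) (Set.mem_univ t)
    (show (0:ℝ) ≤ 1 - x by linarith) hx0 (show (1 - x) + x = 1 by ring)
  simp only [smul_eq_mul, mul_zero, zero_add, Real.exp_zero, mul_one] at h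
  calc Real.exp (t * x) = Real.exp (x * t) := by rw [mul_comm]
    _ ≤ 1 - x + x * Real.exp t := h

lemma stmt19_numeric {δ : ℝ} (hδ0 : 0 < δ) (hδ1 : δ < 1) :
    -(1 - δ) * Real.log (1 - δ) - δ ≤ -δ ^ 2 / 2 := by
  have h1 : (0:ℝ) < 1 - δ := by linarith
  set s : ℝ := -Real.log (1 - δ) with hs
  have hlog : Real.log (1 - δ) < 0 := Real.log_neg h1 (by linarith)
  have hspos : 0 < s := by simp [hs]; linarith
  have h2 : s < Real.sinh s := Real.self_lt_sinh_iff.mpr hspos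
  rw [Real.sinh_eq] at h2
  have he1 : Real.exp s = (1 - δ)⁻¹ := by
    rw [hs, Real.exp_neg, Real.exp_log h1]
  have he2 : Real.exp (-s) = 1 - δ := by
    rw [hs, neg_neg, Real.exp_log h1]
  rw [he1, he2] at h2
  have h3 : -Real.log (1 - δ) < ((1 - δ)⁻¹ - (1 - δ)) / 2 := by rw [hs] at h2; exact h2
  have h4 : (1 - δ) * ((1 - δ)⁻¹ - (1 - δ)) = 1 - (1-δ)^2 := by
    field_simp
  nlinarith [mul_lt_mul_of_pos_left h3 h1]

/-- NA product bound: integral of product of exp(t X_i), t ≤ 0, is at most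
product of integrals. -/
lemma stmt19_na_prod {Ω : Type*} [MeasurableSpace Ω] (μ : Measure Ω)
    [IsProbabilityMeasure μ] {k : ℕ} (X : Fin k → Ω → ℝ)
    (hmeas : ∀ i, Measurable (X i))
    (hNA : ∀ (I J : Finset (Fin k)), Disjoint I J →
      ∀ f g : (Fin k → ℝ) → ℝ, Monotone f → Monotone g →
        Measurable f → Measurable g →
        (∀ x y : Fin k → ℝ, (∀ i ∈ I, x i = y i) → f x = f y) →
        (∀ x y : Fin k → ℝ, (∀ i ∈ J, x i = y i) → g x = g y) →
        ∫ ω, f (fun i => X i ω) * g (fun i => X i ω) ∂μ ≤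
          (∫ ω, f (fun i => X i ω) ∂μ) * ∫ ω, g (fun i => X i ω) ∂μ)
    {t : ℝ} (ht : t ≤ 0) (s : Finset (Fin k)) :
    ∫ ω, ∏ i ∈ s, Real.exp (t * X i ω) ∂μ ≤
      ∏ i ∈ s, ∫ ω, Real.exp (t * X i ω) ∂μ := by
  classical
  induction s using Finset.induction with
  | empty => simp
  | insert _ _ ha _ =>
    rename_i a s ih
    -- f and g
    set f : (Fin k → ℝ) → ℝ := fun x => -Real.exp (t * x a) with hf
    set g : (Fin k → ℝ) → ℝ := fun x => -(∏ i ∈ s, Real.exp (t * x i)) with hg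
    have hmono_exp : ∀ (i : Fin k) (x y : Fin k → ℝ), x ≤ y →
        Real.exp (t * y i) ≤ Real.exp (t * x i) := by
      intro i x y hxy
      exact Real.exp_le_exp.mpr (mul_le_mul_of_nonpos_left (hxy i) ht)
    have hmf : Monotone f := by
      intro x y hxy
      simp only [hf, neg_le_neg_iff]
      exact hmono_exp a x y hxy
    have hmg : Monotone g := by
      intro x y hxy
      simp only [hg, neg_le_neg_iff]
      refine Finset.prod_le_prod (fun i _ => (Real.exp_pos _).le)
        (fun i _ => hmono_exp i x y hxy)
    have hMf : Measurable f :=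
      ((Real.measurable_exp.comp (measurable_const.mul (measurable_pi_apply a)))).neg
    have hMg : Measurable g := by
      refine Measurable.neg ?_
      exact Finset.measurable_prod _ fun i _ =>
        Real.measurable_exp.comp (measurable_const.mul (measurable_pi_apply i))
    have hdep_f : ∀ x y : Fin k → ℝ, (∀ i ∈ ({a} : Finset (Fin k)), x i = y i) → f x = f y := by
      intro x y h
      simp [hf, h a (Finset.mem_singleton_self a)]
    have hdep_g : ∀ x y : Fin k → ℝ, (∀ i ∈ s, x i = y i) → g x = g y := by
      intro x y h
      simp only [hg, neg_inj]
      exact Finset.prod_congr rfl fun i hi => by rw [h i hi]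
    have hdisj : Disjoint ({a} : Finset (Fin k)) s :=
      Finset.disjoint_singleton_left.mpr ha
    have key := hNA {a} s hdisj f g hmf hmg hMf hMg hdep_f hdep_g
    have hfg : ∀ ω, f (fun i => X i ω) * g (fun i => X i ω) =
        ∏ i ∈ insert a s, Real.exp (t * X i ω) := by
      intro ω
      rw [Finset.prod_insert ha]
      simp [hf, hg]
    have h1 : ∫ ω, ∏ i ∈ insert a s, Real.exp (t * X i ω) ∂μ ≤
        (∫ ω, Real.exp (t * X a ω) ∂μ) * ∫ ω, ∏ i ∈ s, Real.exp (t * X i ω) ∂μ := by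
      calc ∫ ω, ∏ i ∈ insert a s, Real.exp (t * X i ω) ∂μ
          = ∫ ω, f (fun i => X i ω) * g (fun i => X i ω) ∂μ := by
            exact integral_congr_ae (Filter.Eventually.of_forall fun ω => (hfg ω).symm)
        _ ≤ (∫ ω, f (fun i => X i ω) ∂μ) * ∫ ω, g (fun i => X i ω) ∂μ := key
        _ = (∫ ω, Real.exp (t * X a ω) ∂μ) * ∫ ω, ∏ i ∈ s, Real.exp (t * X i ω) ∂μ := by
            simp only [hf, hg, integral_neg, neg_mul_neg]
    rw [Finset.prod_insert ha]
    refine h1.trans ?_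
    exact mul_le_mul_of_nonneg_left ih
      (integral_nonneg fun ω => (Real.exp_pos _).le)


/-- lower-tail Chernoff bound for negatively associated random variables
`X_1, …, X_k` with values in `[0,1]`: with `X = ∑ X_i` and `μ* = E[X]`, for any
`0 < δ < 1` we have `P[X ≤ μ*(1-δ)] ≤ exp(-μ*δ²/2)`.  Negative association is stated as:
for disjoint index sets `I, J` and coordinatewise nondecreasing functions `f, g`
depending only on the coordinates in `I` resp. `J`,
`E[f(X)·g(X)] ≤ E[f(X)]·E[g(X)]`. -/
theorem stmt19 {Ω : Type*} [MeasurableSpace Ω] (μ : Measure Ω)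
    [IsProbabilityMeasure μ] (k : ℕ) (X : Fin k → Ω → ℝ)
    (hmeas : ∀ i, Measurable (X i))
    (hrange : ∀ i ω, X i ω ∈ Set.Icc (0 : ℝ) 1)
    (hNA : ∀ (I J : Finset (Fin k)), Disjoint I J →
      ∀ f g : (Fin k → ℝ) → ℝ, Monotone f → Monotone g →
        Measurable f → Measurable g →
        (∀ x y : Fin k → ℝ, (∀ i ∈ I, x i = y i) → f x = f y) →
        (∀ x y : Fin k → ℝ, (∀ i ∈ J, x i = y i) → g x = g y) →
        ∫ ω, f (fun i => X i ω) * g (fun i => X i ω) ∂μ ≤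
          (∫ ω, f (fun i => X i ω) ∂μ) * ∫ ω, g (fun i => X i ω) ∂μ)
    (δ : ℝ) (hδ0 : 0 < δ) (hδ1 : δ < 1) :
    (μ {ω | ∑ i, X i ω ≤ (∫ ω, ∑ i, X i ω ∂μ) * (1 - δ)}).toReal ≤
      Real.exp (-(∫ ω, ∑ i, X i ω ∂μ) * δ ^ 2 / 2) := by
  classical
  have h1δ : (0:ℝ) < 1 - δ := by linarith
  set t : ℝ := Real.log (1 - δ) with htdef
  have ht : t ≤ 0 := (Real.log_neg h1δ (by linarith)).le
  have het : Real.exp t = 1 - δ := Real.exp_log h1δ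
  set p : ℝ := ∫ ω, ∑ i, X i ω ∂μ with hpdef
  -- basic facts
  have hXi_int : ∀ i, Integrable (X i) μ := by
    intro i
    refine Integrable.mono' (integrable_const 1) (hmeas i).aestronglyMeasurable ?_
    exact Filter.Eventually.of_forall fun ω => by
      rw [Real.norm_eq_abs, abs_of_nonneg (hrange i ω).1]; exact (hrange i ω).2
  have hp_nonneg : 0 ≤ p :=
    integral_nonneg fun ω => Finset.sum_nonneg fun i _ => (hrange i ω).1
  have hsum_meas : Measurable (fun ω => ∑ i, X i ω) :=
    Finset.measurable_sum _ fun i _ => hmeas i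
  have hsum_nonneg : ∀ ω, 0 ≤ ∑ i, X i ω :=
    fun ω => Finset.sum_nonneg fun i _ => (hrange i ω).1
  have hexp_int : Integrable (fun ω => Real.exp (t * ∑ i, X i ω)) μ := by
    refine Integrable.mono' (integrable_const 1)
      (Real.measurable_exp.comp (measurable_const.mul hsum_meas)).aestronglyMeasurable ?_
    refine Filter.Eventually.of_forall fun ω => ?_
    rw [Real.norm_eq_abs, abs_of_nonneg (Real.exp_pos _).le]
    exact Real.exp_le_one_iff.mpr (mul_nonpos_of_nonpos_of_nonneg ht (hsum_nonneg ω))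
  -- Chernoff / Markov
  have hmarkov := ProbabilityTheory.measure_le_le_exp_mul_mgf
    (X := fun ω => ∑ i, X i ω) (μ := μ) (t := t) (p * (1 - δ)) ht hexp_int
  refine hmarkov.trans ?_
  -- bound the mgf
  have hmgf_eq : ProbabilityTheory.mgf (fun ω => ∑ i, X i ω) μ t =
      ∫ ω, ∏ i, Real.exp (t * X i ω) ∂μ := by
    rw [ProbabilityTheory.mgf]
    refine integral_congr_ae (Filter.Eventually.of_forall fun ω => ?_)
    simp only [Finset.mul_sum, Real.exp_sum]
  have hfactor : ∀ i : Fin k, ∫ ω, Real.exp (t * X i ω) ∂μ ≤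
      Real.exp ((∫ ω, X i ω ∂μ) * (Real.exp t - 1)) := by
    intro i
    have hfi_int : Integrable (fun ω => Real.exp (t * X i ω)) μ := by
      refine Integrable.mono' (integrable_const 1)
        (Real.measurable_exp.comp (measurable_const.mul (hmeas i))).aestronglyMeasurable ?_
      refine Filter.Eventually.of_forall fun ω => ?_
      rw [Real.norm_eq_abs, abs_of_nonneg (Real.exp_pos _).le]
      exact Real.exp_le_one_iff.mpr (mul_nonpos_of_nonpos_of_nonneg ht (hrange i ω).1)
    have hrhs_int : Integrable (fun ω => 1 - X i ω + X i ω * Real.exp t) μ :=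
      ((integrable_const 1).sub (hXi_int i)).add ((hXi_int i).mul_const _)
    have step1 : ∫ ω, Real.exp (t * X i ω) ∂μ ≤
        ∫ ω, (1 - X i ω + X i ω * Real.exp t) ∂μ := by
      refine integral_mono hfi_int hrhs_int fun ω => ?_
      exact stmt19_exp_convex (hrange i ω).1 (hrange i ω).2
    have step2 : ∫ ω, (1 - X i ω + X i ω * Real.exp t) ∂μ =
        1 + (∫ ω, X i ω ∂μ) * (Real.exp t - 1) := by
      have ha : ∫ ω, (1 - X i ω + X i ω * Real.exp t) ∂μ
          = (∫ ω, (1 - X i ω) ∂μ) + ∫ ω, X i ω * Real.exp t ∂μ :=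
        integral_add ((integrable_const 1).sub (hXi_int i)) ((hXi_int i).mul_const _)
      have hb : ∫ ω, (1 - X i ω) ∂μ = 1 - ∫ ω, X i ω ∂μ := by
        rw [integral_sub (integrable_const 1) (hXi_int i), integral_const]
        simp
      have hc : ∫ ω, X i ω * Real.exp t ∂μ = (∫ ω, X i ω ∂μ) * Real.exp t :=
        integral_mul_const _ _
      rw [ha, hb, hc]
      ring
    refine step1.trans ?_
    rw [step2]
    calc 1 + (∫ ω, X i ω ∂μ) * (Real.exp t - 1)
        = (∫ ω, X i ω ∂μ) * (Real.exp t - 1) + 1 := by ring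
      _ ≤ Real.exp ((∫ ω, X i ω ∂μ) * (Real.exp t - 1)) := Real.add_one_le_exp _
  have hprod : ∫ ω, ∏ i, Real.exp (t * X i ω) ∂μ ≤
      Real.exp (p * (Real.exp t - 1)) := by
    calc ∫ ω, ∏ i, Real.exp (t * X i ω) ∂μ
        ≤ ∏ i, ∫ ω, Real.exp (t * X i ω) ∂μ :=
          stmt19_na_prod μ X hmeas hNA ht Finset.univ
      _ ≤ ∏ i, Real.exp ((∫ ω, X i ω ∂μ) * (Real.exp t - 1)) := by
          refine Finset.prod_le_prod (fun i _ => integral_nonneg fun ω => (Real.exp_pos _).le)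
            (fun i _ => hfactor i)
      _ = Real.exp (∑ i, (∫ ω, X i ω ∂μ) * (Real.exp t - 1)) := by
          rw [← Real.exp_sum]
      _ = Real.exp (p * (Real.exp t - 1)) := by
          rw [← Finset.sum_mul, hpdef, integral_finset_sum _ fun i _ => hXi_int i]
  have hfinal : Real.exp (-t * (p * (1 - δ))) * Real.exp (p * (Real.exp t - 1)) ≤
      Real.exp (-p * δ ^ 2 / 2) := by
    rw [← Real.exp_add]
    refine Real.exp_le_exp.mpr ?_
    have hnum := stmt19_numeric hδ0 hδ1
    have : -t * (p * (1 - δ)) + p * (Real.exp t - 1) =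
        p * (-(1 - δ) * Real.log (1 - δ) - δ) := by
      rw [het, htdef]; ring
    rw [this]
    calc p * (-(1 - δ) * Real.log (1 - δ) - δ) ≤ p * (-δ ^ 2 / 2) :=
          mul_le_mul_of_nonneg_left hnum hp_nonneg
      _ = -p * δ ^ 2 / 2 := by ring
  calc Real.exp (-t * (p * (1 - δ))) * ProbabilityTheory.mgf (fun ω => ∑ i, X i ω) μ t
      ≤ Real.exp (-t * (p * (1 - δ))) * Real.exp (p * (Real.exp t - 1)) := by
        refine mul_le_mul_of_nonneg_left ?_ (Real.exp_pos _).le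
        rw [hmgf_eq]; exact hprod
    _ ≤ Real.exp (-p * δ ^ 2 / 2) := hfinal
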